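/- Deterministic replay for unbuffered channels: if all channel communications in a recorded run use only unbuffered channels, then any two exhaustive trace replays of the thread-local traces assign identical vector clocks to each event (trace replay is confluent and yields a unique vector clock annotation). -/

import Mathlib

/-- Run-time events of the recorded trace (unbuffered channels only).
`postSend i j x` / `postRecv i j x` record the sender's thread id `i`
and program counter `j` for channel `x`; `postRecvClosed x` is a receive
on a closed channel. -/
inductive Ev : Type
  | signal (n : ℕ)
  | wait (n : ℕ)
  | pre
  | postSend (i j x : ℕ)
  | postRecv (i j x : ℕ)
  | postRecvClosed (x : ℕ)
  | postClose (x : ℕ)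
  | postDefault
  deriving DecidableEq

/-- A replay configuration: per-thread vector clocks, remaining
thread-local traces, and the per-thread log of vector clocks assigned to
the consumed (post) events, in order. -/
structure Cfg (k : ℕ) where
  clocks : Fin k → Fin k → ℕ
  traces : Fin k → List Ev
  log : Fin k → List (Fin k → ℕ)

def vcInc {k : ℕ} (i : Fin k) (cs : Fin k → ℕ) : Fin k → ℕ :=
  fun j => if j = i then cs j + 1 else cs j

def vcMax {k : ℕ} (a b : Fin k → ℕ) : Fin k → ℕ :=
  fun j => max (a j) (b j)

/-- Trace replay rules for unbuffered channels. -/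
inductive Step {k : ℕ} : Cfg k → Cfg k → Prop
  | signalWait (c : Cfg k) (i1 i2 : Fin k) (n : ℕ) (t1 t2 : List Ev)
      (h12 : i1 ≠ i2)
      (h1 : c.traces i1 = Ev.signal n :: t1)
      (h2 : c.traces i2 = Ev.wait n :: t2) :
      Step c ⟨Function.update (Function.update c.clocks i1 (vcInc i1 (c.clocks i1)))
                i2 (vcInc i2 (c.clocks i2)),
              Function.update (Function.update c.traces i1 t1) i2 t2,
              c.log⟩
  | sync (c : Cfg k) (i1 i2 : Fin k) (j x : ℕ) (t1 t2 : List Ev)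
      (h12 : i1 ≠ i2)
      (h1 : c.traces i1 = Ev.pre :: Ev.postSend i1.val j x :: t1)
      (h2 : c.traces i2 = Ev.pre :: Ev.postRecv i1.val j x :: t2) :
      Step c ⟨Function.update (Function.update c.clocks i1
                (vcMax (vcInc i1 (c.clocks i1)) (vcInc i2 (c.clocks i2))))
                i2 (vcMax (vcInc i1 (c.clocks i1)) (vcInc i2 (c.clocks i2))),
              Function.update (Function.update c.traces i1 t1) i2 t2,
              Function.update (Function.update c.log i1
                (c.log i1 ++ [vcMax (vcInc i1 (c.clocks i1)) (vcInc i2 (c.clocks i2))]))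
                i2 (c.log i2 ++ [vcMax (vcInc i1 (c.clocks i1)) (vcInc i2 (c.clocks i2))])⟩
  | close (c : Cfg k) (i : Fin k) (x : ℕ) (t : List Ev)
      (h : c.traces i = Ev.postClose x :: t) :
      Step c ⟨Function.update c.clocks i (vcInc i (c.clocks i)),
              Function.update c.traces i t,
              Function.update c.log i (c.log i ++ [vcInc i (c.clocks i)])⟩
  | recvClosed (c : Cfg k) (i : Fin k) (x : ℕ) (t : List Ev)
      (h : c.traces i = Ev.pre :: Ev.postRecvClosed x :: t) :
      Step c ⟨Function.update c.clocks i (vcInc i (c.clocks i)),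
              Function.update c.traces i t,
              Function.update c.log i (c.log i ++ [vcInc i (c.clocks i)])⟩
  | default (c : Cfg k) (i : Fin k) (t : List Ev)
      (h : c.traces i = Ev.pre :: Ev.postDefault :: t) :
      Step c ⟨Function.update c.clocks i (vcInc i (c.clocks i)),
              Function.update c.traces i t,
              Function.update c.log i (c.log i ++ [vcInc i (c.clocks i)])⟩

/-! ### Auxiliary development for confluence -/

open Function

/-- Total occurrence count of an event across all remaining traces. -/
def cnt {k : ℕ} (tr : Fin k → List Ev) (e : Ev) : ℕ := ∑ l : Fin k, (tr l).count e

/-- Uniqueness invariant maintained during replay. -/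
def UInv {k : ℕ} (c : Cfg k) : Prop :=
  (∀ i j x : ℕ, cnt c.traces (Ev.postRecv i j x) ≤ 1) ∧
  (∀ n : ℕ, cnt c.traces (Ev.signal n) ≤ 1) ∧
  (∀ n : ℕ, cnt c.traces (Ev.wait n) ≤ 1)

/-- Redexes: identified choices of rule instances. -/
inductive Rdx (k : ℕ) : Type
  | sw (i1 i2 : Fin k) (n : ℕ)
  | sy (i1 i2 : Fin k) (j x : ℕ)
  | cl (i : Fin k) (x : ℕ)
  | rc (i : Fin k) (x : ℕ)
  | df (i : Fin k)

/-- Threads touched by a redex. -/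
def thr {k : ℕ} : Rdx k → Fin k → Prop
  | .sw i1 i2 _ => fun l => l = i1 ∨ l = i2
  | .sy i1 i2 _ _ => fun l => l = i1 ∨ l = i2
  | .cl i _ => fun l => l = i
  | .rc i _ => fun l => l = i
  | .df i => fun l => l = i

/-- A redex is enabled. -/
def En {k : ℕ} : Rdx k → Cfg k → Prop
  | .sw i1 i2 n => fun c => i1 ≠ i2 ∧ (∃ t, c.traces i1 = Ev.signal n :: t) ∧
      ∃ t, c.traces i2 = Ev.wait n :: t
  | .sy i1 i2 j x => fun c => i1 ≠ i2 ∧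
      (∃ t, c.traces i1 = Ev.pre :: Ev.postSend i1.val j x :: t) ∧
      ∃ t, c.traces i2 = Ev.pre :: Ev.postRecv i1.val j x :: t
  | .cl i x => fun c => ∃ t, c.traces i = Ev.postClose x :: t
  | .rc i x => fun c => ∃ t, c.traces i = Ev.pre :: Ev.postRecvClosed x :: t
  | .df i => fun c => ∃ t, c.traces i = Ev.pre :: Ev.postDefault :: t

/-- Applying a redex. -/
def ap {k : ℕ} : Rdx k → Cfg k → Cfg k
  | .sw i1 i2 _, c =>
      ⟨update (update c.clocks i1 (vcInc i1 (c.clocks i1))) i2 (vcInc i2 (c.clocks i2)),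
       update (update c.traces i1 ((c.traces i1).tail)) i2 ((c.traces i2).tail),
       c.log⟩
  | .sy i1 i2 _ _, c =>
      ⟨update (update c.clocks i1
          (vcMax (vcInc i1 (c.clocks i1)) (vcInc i2 (c.clocks i2)))) i2
          (vcMax (vcInc i1 (c.clocks i1)) (vcInc i2 (c.clocks i2))),
       update (update c.traces i1 ((c.traces i1).drop 2)) i2 ((c.traces i2).drop 2),
       update (update c.log i1
          (c.log i1 ++ [vcMax (vcInc i1 (c.clocks i1)) (vcInc i2 (c.clocks i2))])) i2
          (c.log i2 ++ [vcMax (vcInc i1 (c.clocks i1)) (vcInc i2 (c.clocks i2))])⟩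
  | .cl i _, c =>
      ⟨update c.clocks i (vcInc i (c.clocks i)),
       update c.traces i ((c.traces i).tail),
       update c.log i (c.log i ++ [vcInc i (c.clocks i)])⟩
  | .rc i _, c =>
      ⟨update c.clocks i (vcInc i (c.clocks i)),
       update c.traces i ((c.traces i).drop 2),
       update c.log i (c.log i ++ [vcInc i (c.clocks i)])⟩
  | .df i, c =>
      ⟨update c.clocks i (vcInc i (c.clocks i)),
       update c.traces i ((c.traces i).drop 2),
       update c.log i (c.log i ++ [vcInc i (c.clocks i)])⟩

lemma step_iff {k : ℕ} {c c' : Cfg k} :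
    Step c c' ↔ ∃ r : Rdx k, En r c ∧ c' = ap r c := by
  constructor
  · rintro h
    cases h with
    | signalWait i1 i2 n t1 t2 h12 h1 h2 =>
        exact ⟨.sw i1 i2 n, ⟨h12, ⟨_, h1⟩, ⟨_, h2⟩⟩, by simp [ap, h1, h2]⟩
    | sync i1 i2 j x t1 t2 h12 h1 h2 =>
        exact ⟨.sy i1 i2 j x, ⟨h12, ⟨_, h1⟩, ⟨_, h2⟩⟩, by simp [ap, h1, h2]⟩
    | close i x t h => exact ⟨.cl i x, ⟨_, h⟩, by simp [ap, h]⟩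
    | recvClosed i x t h => exact ⟨.rc i x, ⟨_, h⟩, by simp [ap, h]⟩
    | default i t h => exact ⟨.df i, ⟨_, h⟩, by simp [ap, h]⟩
  · rintro ⟨r, hr, rfl⟩
    cases r with
    | sw i1 i2 n =>
        obtain ⟨h12, ⟨t1, h1⟩, ⟨t2, h2⟩⟩ := hr
        have := Step.signalWait c i1 i2 n t1 t2 h12 h1 h2
        simpa [ap, h1, h2] using this
    | sy i1 i2 j x =>
        obtain ⟨h12, ⟨t1, h1⟩, ⟨t2, h2⟩⟩ := hr
        have := Step.sync c i1 i2 j x t1 t2 h12 h1 h2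
        simpa [ap, h1, h2] using this
    | cl i x =>
        obtain ⟨t, h⟩ := hr
        simpa [ap, h] using Step.close c i x t h
    | rc i x =>
        obtain ⟨t, h⟩ := hr
        simpa [ap, h] using Step.recvClosed c i x t h
    | df i =>
        obtain ⟨t, h⟩ := hr
        simpa [ap, h] using Step.default c i t h

lemma ap_untouched {k : ℕ} (r : Rdx k) (c : Cfg k) (l : Fin k) (hl : ¬ thr r l) :
    (ap r c).traces l = c.traces l ∧ (ap r c).clocks l = c.clocks l ∧
    (ap r c).log l = c.log l := by
  cases r with
  | sw i1 i2 n =>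
      simp only [thr, not_or] at hl
      simp [ap, update_of_ne hl.1, update_of_ne hl.2]
  | sy i1 i2 j x =>
      simp only [thr, not_or] at hl
      simp [ap, update_of_ne hl.1, update_of_ne hl.2]
  | cl i x => simp only [thr] at hl; simp [ap, update_of_ne hl]
  | rc i x => simp only [thr] at hl; simp [ap, update_of_ne hl]
  | df i => simp only [thr] at hl; simp [ap, update_of_ne hl]

lemma en_congr {k : ℕ} (r : Rdx k) (c c' : Cfg k)
    (h : ∀ l, thr r l → c.traces l = c'.traces l) (he : En r c) : En r c' := by
  cases r with
  | sw i1 i2 n =>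
      obtain ⟨h12, ⟨t1, h1⟩, t2, h2⟩ := he
      exact ⟨h12, ⟨t1, (h i1 (Or.inl rfl)) ▸ h1⟩, t2, (h i2 (Or.inr rfl)) ▸ h2⟩
  | sy i1 i2 j x =>
      obtain ⟨h12, ⟨t1, h1⟩, t2, h2⟩ := he
      exact ⟨h12, ⟨t1, (h i1 (Or.inl rfl)) ▸ h1⟩, t2, (h i2 (Or.inr rfl)) ▸ h2⟩
  | cl i x => obtain ⟨t, ht⟩ := he; exact ⟨t, (h i rfl) ▸ ht⟩
  | rc i x => obtain ⟨t, ht⟩ := he; exact ⟨t, (h i rfl) ▸ ht⟩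
  | df i => obtain ⟨t, ht⟩ := he; exact ⟨t, (h i rfl) ▸ ht⟩

lemma ap_congr {k : ℕ} (r : Rdx k) (c c' : Cfg k)
    (h : ∀ l, thr r l → c.traces l = c'.traces l ∧ c.clocks l = c'.clocks l ∧
      c.log l = c'.log l) :
    ∀ l, thr r l → (ap r c).traces l = (ap r c').traces l ∧
      (ap r c).clocks l = (ap r c').clocks l ∧ (ap r c).log l = (ap r c').log l := by
  intro l hl
  cases r with
  | sw i1 i2 n =>
      obtain ⟨ht1, hc1, hg1⟩ := h i1 (Or.inl rfl)
      obtain ⟨ht2, hc2, hg2⟩ := h i2 (Or.inr rfl)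
      rcases hl with rfl | rfl
      · by_cases hli : l = i2 <;>
          simp [ap, hli, Function.update, ht1, hc1, hg1, ht2, hc2, hg2]
      · simp [ap, ht2, hc2, hg2]
  | sy i1 i2 j x =>
      obtain ⟨ht1, hc1, hg1⟩ := h i1 (Or.inl rfl)
      obtain ⟨ht2, hc2, hg2⟩ := h i2 (Or.inr rfl)
      rcases hl with rfl | rfl
      · by_cases hli : l = i2 <;>
          simp [ap, hli, Function.update, ht1, hc1, hg1, ht2, hc2, hg2]
      · simp [ap, ht2, hc2, hg2, hc1]
  | cl i x =>
      obtain ⟨ht, hc, hg⟩ := h i rfl; subst hl; simp [ap, ht, hc, hg]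
  | rc i x =>
      obtain ⟨ht, hc, hg⟩ := h i rfl; subst hl; simp [ap, ht, hc, hg]
  | df i =>
      obtain ⟨ht, hc, hg⟩ := h i rfl; subst hl; simp [ap, ht, hc, hg]

lemma ap_comm {k : ℕ} (r1 r2 : Rdx k) (c : Cfg k)
    (hd : ∀ l, ¬ (thr r1 l ∧ thr r2 l)) :
    ap r2 (ap r1 c) = ap r1 (ap r2 c) := by
  have key : ∀ l : Fin k,
      (ap r2 (ap r1 c)).traces l = (ap r1 (ap r2 c)).traces l ∧
      (ap r2 (ap r1 c)).clocks l = (ap r1 (ap r2 c)).clocks l ∧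
      (ap r2 (ap r1 c)).log l = (ap r1 (ap r2 c)).log l := by
    intro l
    by_cases h1 : thr r1 l
    · have h2 : ¬ thr r2 l := fun h2 => hd l ⟨h1, h2⟩
      obtain ⟨a1, a2, a3⟩ := ap_untouched r2 (ap r1 c) l h2
      have hag : ∀ m, thr r1 m → c.traces m = (ap r2 c).traces m ∧
          c.clocks m = (ap r2 c).clocks m ∧ c.log m = (ap r2 c).log m := by
        intro m hm
        obtain ⟨b1, b2, b3⟩ := ap_untouched r2 c m (fun hm2 => hd m ⟨hm, hm2⟩)
        exact ⟨b1.symm, b2.symm, b3.symm⟩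
      obtain ⟨e1, e2, e3⟩ := ap_congr r1 c (ap r2 c) hag l h1
      exact ⟨a1.trans e1, a2.trans e2, a3.trans e3⟩
    · by_cases h2 : thr r2 l
      · obtain ⟨a1, a2, a3⟩ := ap_untouched r1 (ap r2 c) l h1
        have hag : ∀ m, thr r2 m → c.traces m = (ap r1 c).traces m ∧
            c.clocks m = (ap r1 c).clocks m ∧ c.log m = (ap r1 c).log m := by
          intro m hm
          obtain ⟨b1, b2, b3⟩ := ap_untouched r1 c m (fun hm2 => hd m ⟨hm2, hm⟩)
          exact ⟨b1.symm, b2.symm, b3.symm⟩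
        obtain ⟨e1, e2, e3⟩ := ap_congr r2 c (ap r1 c) hag l h2
        exact ⟨e1.symm.trans a1.symm, e2.symm.trans a2.symm, e3.symm.trans a3.symm⟩
      · obtain ⟨a1, a2, a3⟩ := ap_untouched r1 c l h1
        obtain ⟨b1, b2, b3⟩ := ap_untouched r2 (ap r1 c) l h2
        obtain ⟨a1', a2', a3'⟩ := ap_untouched r2 c l h2
        obtain ⟨b1', b2', b3'⟩ := ap_untouched r1 (ap r2 c) l h1
        refine ⟨?_, ?_, ?_⟩ <;> simp [a1, a2, a3, b1, b2, b3, a1', a2', a3', b1', b2', b3']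
  obtain ⟨c1, t1, g1⟩ : (ap r2 (ap r1 c)).clocks = (ap r1 (ap r2 c)).clocks ∧
      (ap r2 (ap r1 c)).traces = (ap r1 (ap r2 c)).traces ∧
      (ap r2 (ap r1 c)).log = (ap r1 (ap r2 c)).log := by
    refine ⟨funext fun l => (key l).2.1, funext fun l => (key l).1, funext fun l => (key l).2.2⟩
  cases hA : ap r2 (ap r1 c); cases hB : ap r1 (ap r2 c)
  simp_all

lemma two_count {k : ℕ} (tr : Fin k → List Ev) (e : Ev) {l1 l2 : Fin k} (h : l1 ≠ l2)
    (h1 : e ∈ tr l1) (h2 : e ∈ tr l2) : 2 ≤ cnt tr e := by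
  have hsub : (tr l1).count e + (tr l2).count e ≤ cnt tr e :=
    calc (tr l1).count e + (tr l2).count e
        = ∑ x ∈ ({l1, l2} : Finset (Fin k)), (tr x).count e :=
          (Finset.sum_pair (f := fun x => (tr x).count e) h).symm
      _ ≤ cnt tr e := Finset.sum_le_sum_of_subset (Finset.subset_univ _)
  have c1 : 0 < (tr l1).count e := List.count_pos_iff.mpr h1
  have c2 : 0 < (tr l2).count e := List.count_pos_iff.mpr h2
  omega

lemma head_forces {k : ℕ} {tr : Fin k → List Ev} {e : Ev} (hle : cnt tr e ≤ 1)
    {l1 l2 : Fin k} (h1 : e ∈ tr l1) (h2 : e ∈ tr l2) : l1 = l2 := by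
  by_contra h
  have := two_count tr e h h1 h2
  omega

lemma en_unique {k : ℕ} {c : Cfg k} (hI : UInv c) {r1 r2 : Rdx k}
    (h1 : En r1 c) (h2 : En r2 c) {l : Fin k} (hl1 : thr r1 l) (hl2 : thr r2 l) :
    r1 = r2 := by
  obtain ⟨hRecv, hSig, hWait⟩ := hI
  cases r1 <;> cases r2 <;> simp only [En] at h1 h2 <;> simp only [thr] at hl1 hl2 <;>
    (try obtain ⟨h12, ⟨s1, e1⟩, s2, e2⟩ := h1) <;>
    (try obtain ⟨s1, e1⟩ := h1) <;>
    (try obtain ⟨h12', ⟨s1', e1'⟩, s2', e2'⟩ := h2) <;>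
    (try obtain ⟨s1', e1'⟩ := h2) <;>
    (first | (rcases hl1 with (rfl | rfl)) | subst hl1) <;>
    (first | (rcases hl2 with (rfl | rfl)) | subst hl2) <;>
    try simp_all
  all_goals first
    | exact head_forces (hWait _) (e2 ▸ List.mem_cons_self)
        (e2' ▸ List.mem_cons_self)
    | exact head_forces (hSig _) (e1 ▸ List.mem_cons_self)
        (e1' ▸ List.mem_cons_self)
    | exact head_forces (hRecv _ _ _)
        (e2 ▸ List.mem_cons_of_mem _ (List.mem_cons_self))
        (e2' ▸ List.mem_cons_of_mem _ (List.mem_cons_self))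
    | exact Fin.val_injective e2.1.1
    | exact (Fin.val_injective e2.1.1).symm
    | exact Fin.val_injective e2'.1.1
    | exact (Fin.val_injective e2'.1.1).symm

lemma ap_traces_suffix {k : ℕ} (r : Rdx k) (c : Cfg k) (l : Fin k) :
    (ap r c).traces l <:+ c.traces l := by
  cases r <;> simp only [ap, Function.update_apply] <;> split_ifs with h1 h2 <;>
    (try subst h1) <;> (try subst h2) <;>
    first
      | exact List.tail_suffix _
      | exact List.drop_suffix 2 _
      | exact List.suffix_refl _

lemma step_inv {k : ℕ} {c c' : Cfg k} (h : Step c c') (hI : UInv c) : UInv c' := by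
  rw [step_iff] at h
  obtain ⟨r, -, rfl⟩ := h
  have mono : ∀ e, cnt (ap r c).traces e ≤ cnt c.traces e := fun e =>
    Finset.sum_le_sum fun l _ => ((ap_traces_suffix r c l).sublist).count_le e
  exact ⟨fun i j x => le_trans (mono _) (hI.1 i j x),
         fun n => le_trans (mono _) (hI.2.1 n),
         fun n => le_trans (mono _) (hI.2.2 n)⟩

lemma nf_no_step {k : ℕ} {c : Cfg k}
    (hex : ∀ i : Fin k, ∀ e ∈ c.traces i, e = Ev.pre) (c' : Cfg k) : ¬ Step c c' := by
  intro h
  rw [step_iff] at h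
  obtain ⟨r, hr, -⟩ := h
  cases r with
  | sw i1 i2 n =>
      obtain ⟨-, ⟨t, ht⟩, -⟩ := hr
      have : Ev.signal n ∈ c.traces i1 := by rw [ht]; exact List.mem_cons_self
      simpa using hex i1 _ this
  | sy i1 i2 j x =>
      obtain ⟨-, ⟨t, ht⟩, -⟩ := hr
      have : Ev.postSend i1.val j x ∈ c.traces i1 := by
        rw [ht]; exact List.mem_cons_of_mem _ (List.mem_cons_self)
      simpa using hex i1 _ this
  | cl i x =>
      obtain ⟨t, ht⟩ := hr
      have : Ev.postClose x ∈ c.traces i := by rw [ht]; exact List.mem_cons_self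
      simpa using hex i _ this
  | rc i x =>
      obtain ⟨t, ht⟩ := hr
      have : Ev.postRecvClosed x ∈ c.traces i := by
        rw [ht]; exact List.mem_cons_of_mem _ (List.mem_cons_self)
      simpa using hex i _ this
  | df i =>
      obtain ⟨t, ht⟩ := hr
      have : Ev.postDefault ∈ c.traces i := by
        rw [ht]; exact List.mem_cons_of_mem _ (List.mem_cons_self)
      simpa using hex i _ this

/-- The replay relation restricted to invariant-satisfying sources. -/
def StepI {k : ℕ} (c c' : Cfg k) : Prop := UInv c ∧ Step c c'

lemma stepI_diamond {k : ℕ} : ∀ a b c : Cfg k, StepI a b → StepI a c →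
    ∃ d, Relation.ReflGen StepI b d ∧ Relation.ReflTransGen StepI c d := by
  rintro a b c ⟨hI, hab⟩ ⟨-, hac⟩
  rw [step_iff] at hab hac
  obtain ⟨r1, he1, rfl⟩ := hab
  obtain ⟨r2, he2, rfl⟩ := hac
  by_cases hrr : r1 = r2
  · subst hrr
    exact ⟨ap r1 a, Relation.ReflGen.refl, Relation.ReflTransGen.refl⟩
  · have hd : ∀ l, ¬ (thr r1 l ∧ thr r2 l) := fun l ⟨hl1, hl2⟩ =>
      hrr (en_unique hI he1 he2 hl1 hl2)
    have hIb : UInv (ap r1 a) := step_inv (step_iff.mpr ⟨r1, he1, rfl⟩) hI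
    have hIc : UInv (ap r2 a) := step_inv (step_iff.mpr ⟨r2, he2, rfl⟩) hI
    have he2' : En r2 (ap r1 a) := en_congr r2 a (ap r1 a)
      (fun l hl => ((ap_untouched r1 a l (fun h => hd l ⟨h, hl⟩)).1).symm) he2
    have he1' : En r1 (ap r2 a) := en_congr r1 a (ap r2 a)
      (fun l hl => ((ap_untouched r2 a l (fun h => hd l ⟨hl, h⟩)).1).symm) he1
    exact ⟨ap r2 (ap r1 a),
      Relation.ReflGen.single ⟨hIb, step_iff.mpr ⟨r2, he2', rfl⟩⟩,
      Relation.ReflTransGen.single ⟨hIc, step_iff.mpr ⟨r1, he1', ap_comm r1 r2 a hd⟩⟩⟩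

/-- Deterministic replay for unbuffered channels: any two exhaustive
replays of well-formed recorded thread-local traces assign identical
vector clocks to each event and end with identical thread clocks. -/
theorem deterministic_replay_unbuffered {k : ℕ} (tr0 : Fin k → List Ev)
    (hsendLoc : ∀ (l : Fin k) (i j x : ℕ), Ev.postSend i j x ∈ tr0 l → i = l.val)
    (hsendUniq : ∀ i j x : ℕ, (∑ l : Fin k, (tr0 l).count (Ev.postSend i j x)) ≤ 1)
    (hrecvUniq : ∀ i j x : ℕ, (∑ l : Fin k, (tr0 l).count (Ev.postRecv i j x)) ≤ 1)
    (hsigUniq : ∀ n : ℕ, (∑ l : Fin k, (tr0 l).count (Ev.signal n)) ≤ 1)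
    (hwaitUniq : ∀ n : ℕ, (∑ l : Fin k, (tr0 l).count (Ev.wait n)) ≤ 1)
    (c c' : Cfg k)
    (hc : Relation.ReflTransGen Step ⟨fun _ _ => 0, tr0, fun _ => []⟩ c)
    (hc' : Relation.ReflTransGen Step ⟨fun _ _ => 0, tr0, fun _ => []⟩ c')
    (hex : ∀ i : Fin k, ∀ e ∈ c.traces i, e = Ev.pre)
    (hex' : ∀ i : Fin k, ∀ e ∈ c'.traces i, e = Ev.pre) :
    c.log = c'.log ∧ c.clocks = c'.clocks := by
  have hI0 : UInv (⟨fun _ _ => 0, tr0, fun _ => []⟩ : Cfg k) :=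
    ⟨hrecvUniq, hsigUniq, hwaitUniq⟩
  have lift : ∀ {d : Cfg k},
      Relation.ReflTransGen Step (⟨fun _ _ => 0, tr0, fun _ => []⟩ : Cfg k) d →
      Relation.ReflTransGen StepI (⟨fun _ _ => 0, tr0, fun _ => []⟩ : Cfg k) d ∧ UInv d := by
    intro d h
    induction h with
    | refl => exact ⟨Relation.ReflTransGen.refl, hI0⟩
    | tail h1 h2 ih => exact ⟨ih.1.tail ⟨ih.2, h2⟩, step_inv h2 ih.2⟩
  obtain ⟨hc1, -⟩ := lift hc
  obtain ⟨hc1', -⟩ := lift hc'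
  obtain ⟨d, hbd, hcd⟩ := Relation.church_rosser stepI_diamond hc1 hc1'
  have hstop : ∀ {a b : Cfg k}, (∀ i : Fin k, ∀ e ∈ a.traces i, e = Ev.pre) →
      Relation.ReflTransGen StepI a b → a = b := by
    intro a b hnf h
    rcases h.cases_head with h | ⟨e, he, -⟩
    · exact h
    · exact absurd he.2 (nf_no_step hnf e)
  have h1 : c = d := hstop hex hbd
  have h2 : c' = d := hstop hex' hcd
  subst h1; rw [h2]
  exact ⟨rfl, rfl⟩
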